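/- Let V' = ⊕_{i=1}^m I[b_i, d'_i] and V = ⊕_{i=1}^m I[b_i, d_i] be representations of A_w with d_i ≤ d'_i for all i and d_i ≤ d'_j for all pairs i,j, and let π: V' → V be the morphism whose matrix form is diagonal with (i,i)-entry the canonical projection I[b_i,d'_i] → I[b_i,d_i]. Suppose φ: V' → V' has diagonal matrix form with scalar entries c_1,...,c_m, ψ: V → V is any endomorphism, and π ∘ φ = ψ ∘ π. Then the matrix form of ψ is diagonal with the same scalar entries c_1,...,c_m. -/

import Mathlib

open scoped Classical

/-- A persistence module over a poset `P`: a functor `P → vect_K`. -/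
structure PersMod (K : Type) [Field K] (P : Type) [Preorder P] : Type 1 where
  V : P → Type
  [acg : ∀ p, AddCommGroup (V p)]
  [mod : ∀ p, Module K (V p)]
  map : ∀ {p q : P}, p ≤ q → (V p →ₗ[K] V q)
  map_id : ∀ p : P, map (le_refl p) = LinearMap.id
  map_comp : ∀ {p q r : P} (hpq : p ≤ q) (hqr : q ≤ r),
    map (le_trans hpq hqr) = (map hqr).comp (map hpq)

attribute [instance] PersMod.acg PersMod.mod

variable {K : Type} [Field K] {P : Type} [Preorder P]

/-- The space of morphisms (natural transformations) between two persistence modules,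
as a submodule of the product of the spaces of linear maps. -/
def HomSpace (M N : PersMod K P) : Submodule K (∀ p, M.V p →ₗ[K] N.V p) where
  carrier := {f | ∀ (p q : P) (h : p ≤ q), (N.map h).comp (f p) = (f q).comp (M.map h)}
  add_mem' := by
    intro f g hf hg p q h
    simp only [Pi.add_apply, LinearMap.comp_add, LinearMap.add_comp, hf p q h, hg p q h]
  zero_mem' := by intro p q h; simp
  smul_mem' := by
    intro c f hf p q h
    simp only [Pi.smul_apply, LinearMap.comp_smul, LinearMap.smul_comp, hf p q h]

/-- Helper: an element of the zero part of an interval module is zero. -/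
lemma seg_val_zero {c : Prop} {inst : Decidable c} (h : ¬c)
    (x : ↥(@ite _ c inst (⊤ : Submodule K K) ⊥)) :
    (x : K) = 0 := by
  obtain ⟨v, hv⟩ := x
  rw [if_neg h] at hv
  exact (Submodule.mem_bot K).mp hv

/-- The interval (segment / rectangle) module `I[a,b]`: value `K` on points `x` with
`a ≤ x ≤ b`, zero elsewhere, identity internal maps. -/
noncomputable def seg (a b : P) : PersMod K P where
  V x := ↥(if a ≤ x ∧ x ≤ b then (⊤ : Submodule K K) else ⊥)
  map {x y} hxy :=
    { toFun := fun c => ⟨if a ≤ x ∧ y ≤ b then (c : K) else 0, by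
        by_cases hc : a ≤ x ∧ y ≤ b
        · rw [if_pos hc, if_pos ⟨le_trans hc.1 hxy, hc.2⟩]; trivial
        · rw [if_neg hc]; exact Submodule.zero_mem _⟩
      map_add' := by
        intro c d; apply Subtype.ext
        by_cases hc : a ≤ x ∧ y ≤ b <;> simp [hc]
      map_smul' := by
        intro r c; apply Subtype.ext
        by_cases hc : a ≤ x ∧ y ≤ b <;> simp [hc] }
  map_id := by
    intro p
    apply LinearMap.ext; intro c
    apply Subtype.ext
    show (if a ≤ p ∧ p ≤ b then (c : K) else 0) = (c : K)
    by_cases hc : a ≤ p ∧ p ≤ b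
    · rw [if_pos hc]
    · rw [seg_val_zero hc c, ite_self]
  map_comp := by
    intro p q r hpq hqr
    apply LinearMap.ext; intro c
    apply Subtype.ext
    show (if a ≤ p ∧ r ≤ b then (c : K) else 0)
      = (if a ≤ q ∧ r ≤ b then (if a ≤ p ∧ q ≤ b then (c : K) else 0) else 0)
    by_cases h1 : a ≤ p ∧ r ≤ b
    · rw [if_pos h1,
        if_pos (show a ≤ q ∧ r ≤ b from ⟨le_trans h1.1 hpq, h1.2⟩),
        if_pos (show a ≤ p ∧ q ≤ b from ⟨h1.1, le_trans hqr h1.2⟩)]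
    · rw [if_neg h1]
      by_cases h2 : a ≤ q ∧ r ≤ b
      · rw [if_pos h2, if_neg (fun h3 => h1 ⟨h3.1, h2.2⟩)]
      · rw [if_neg h2]

/-- The canonical morphism `I[a,b] → I[c,d]`: identity on the intersection, zero elsewhere. -/
noncomputable def canonMap (a b c d : P) (p : P) :
    (seg (K := K) a b).V p →ₗ[K] (seg (K := K) c d).V p where
  toFun v := ⟨if c ≤ p ∧ p ≤ d then v.1 else 0, by
    by_cases hc : c ≤ p ∧ p ≤ d
    · simp only [if_pos hc]; trivial
    · simp only [if_neg hc]; exact Submodule.zero_mem _⟩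
  map_add' := by
    intro v w; apply Subtype.ext
    show (if c ≤ p ∧ p ≤ d then (v + w).1 else 0)
      = (if c ≤ p ∧ p ≤ d then v.1 else 0) + (if c ≤ p ∧ p ≤ d then w.1 else 0)
    by_cases hc : c ≤ p ∧ p ≤ d
    · simp only [if_pos hc]; rfl
    · simp only [if_neg hc]; simp
  map_smul' := by
    intro r v; apply Subtype.ext
    show (if c ≤ p ∧ p ≤ d then (r • v).1 else 0) = r • (if c ≤ p ∧ p ≤ d then v.1 else 0)
    by_cases hc : c ≤ p ∧ p ≤ d
    · simp only [if_pos hc]; rfl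
    · simp only [if_neg hc]; simp

/-- Finite direct sum of persistence modules. -/
noncomputable def dsum {m : ℕ} (M : Fin m → PersMod K P) : PersMod K P where
  V p := ∀ i, (M i).V p
  map h := LinearMap.pi (fun i => ((M i).map h).comp (LinearMap.proj i))
  map_id := by
    intro p
    apply LinearMap.ext; intro v; funext i
    simp [LinearMap.pi, (M i).map_id]
  map_comp := by
    intro p q r h1 h2
    apply LinearMap.ext; intro v; funext i
    simp [LinearMap.pi, (M i).map_comp h1 h2]

/-- Direct sum of two persistence modules. -/
noncomputable def dsum2 (A B : PersMod K P) : PersMod K P where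
  V p := A.V p × B.V p
  map h := (A.map h).prodMap (B.map h)
  map_id := by
    intro p
    show (A.map (le_refl p)).prodMap (B.map (le_refl p)) = LinearMap.id
    rw [A.map_id, B.map_id]
    exact LinearMap.prodMap_id
  map_comp := by
    intro p q r h1 h2
    show (A.map (le_trans h1 h2)).prodMap (B.map (le_trans h1 h2))
      = ((A.map h2).prodMap (B.map h2)).comp ((A.map h1).prodMap (B.map h1))
    rw [A.map_comp h1 h2, B.map_comp h1 h2]
    exact (LinearMap.prodMap_comp _ _ _ _).symm

/-- Isomorphism of persistence modules. -/
def PersIso (M N : PersMod K P) : Prop :=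
  ∃ f ∈ HomSpace M N, ∀ p, Function.Bijective (f p)

/-- The endomorphism algebra of a persistence module. -/
def EndAlg (M : PersMod K P) : Subalgebra K (∀ p, Module.End K (M.V p)) where
  carrier := {f | ∀ (p q : P) (h : p ≤ q), (M.map h).comp (f p) = (f q).comp (M.map h)}
  add_mem' := by
    intro f g hf hg p q h
    simp only [Pi.add_apply, LinearMap.comp_add, LinearMap.add_comp, hf p q h, hg p q h]
  mul_mem' := by
    intro f g hf hg p q h
    show (M.map h).comp ((f p).comp (g p)) = ((f q).comp (g q)).comp (M.map h)
    rw [← LinearMap.comp_assoc, hf p q h, LinearMap.comp_assoc, hg p q h,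
      LinearMap.comp_assoc]
  one_mem' := by intro p q h; rfl
  algebraMap_mem' := by
    intro c p q h
    apply LinearMap.ext; intro v
    simp only [Pi.algebraMap_apply, Module.algebraMap_end_eq_smul_id, LinearMap.comp_apply,
      LinearMap.smul_apply, LinearMap.id_apply, map_smul]

/-- Restriction of a `ℤ×ℤ`-persistence module along a monotone map (a "line"). -/
noncomputable def restrict (L : ℤ → ℤ × ℤ) (hL : Monotone L) (M : PersMod K (ℤ × ℤ)) :
    PersMod K ℤ where
  V i := M.V (L i)
  map h := M.map (hL h)
  map_id := fun p => M.map_id (L p)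
  map_comp := fun h1 h2 => M.map_comp (hL h1) (hL h2)


/-- Propagation of nonzeros through the projection morphism
`π : V' = ⊕ I[b_i, d'_i] → V = ⊕ I[b_i, d_i]`: if `π ∘ φ = ψ ∘ π` with `φ` diagonal
with scalars `c_i`, then `ψ` is diagonal with the same scalars. -/
theorem stmt_8 (K : Type) [Field K] (m : ℕ) (b d d' : Fin m → ℤ) (c : Fin m → K)
    (hbd : ∀ i, b i ≤ d i)
    (hdd' : ∀ i, d i ≤ d' i)
    (hall : ∀ i j, d i ≤ d' j)
    (psi : ∀ p : ℤ, (dsum (K := K) fun i => seg (b i) (d i)).V p →ₗ[K]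
      (dsum (K := K) fun i => seg (b i) (d i)).V p)
    (hpsi : psi ∈ HomSpace (dsum fun i => seg (b i) (d i)) (dsum fun i => seg (b i) (d i)))
    (hcomm : ∀ (p : ℤ) (v : ∀ k, (seg (K := K) (b k) (d' k)).V p) (k : Fin m),
      canonMap (b k) (d' k) (b k) (d k) p (c k • v k)
        = psi p (fun j => canonMap (b j) (d' j) (b j) (d j) p (v j)) k) :
    ∀ (p : ℤ) (i j : Fin m) (v : (seg (K := K) (b i) (d i)).V p),
      (i ≠ j → psi p (Pi.single i v) j = 0) ∧ psi p (Pi.single i v) i = c i • v := by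
  intro p i j v
  by_cases hv : b i ≤ p ∧ p ≤ d i
  case neg =>
    have hv0 : v = 0 := Subtype.ext (seg_val_zero hv v)
    subst hv0
    have h0 : psi p (Pi.single i 0) = 0 := by rw [Pi.single_zero]; exact (psi p).map_zero
    rw [h0]
    exact ⟨fun _ => rfl, by rw [smul_zero]; rfl⟩
  case pos =>
    set v' : (seg (K := K) (b i) (d' i)).V p :=
      ⟨v.1, by rw [if_pos ⟨hv.1, hv.2.trans (hdd' i)⟩]; trivial⟩ with hv'
    have hw : (fun j => canonMap (b j) (d' j) (b j) (d j) p
        ((Pi.single i v' : ∀ k, (seg (K := K) (b k) (d' k)).V p) j)) = Pi.single i v := by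
      funext k
      by_cases hk : k = i
      · subst hk
        simp only [Pi.single_eq_same]
        apply Subtype.ext
        simp only [canonMap, LinearMap.coe_mk, AddHom.coe_mk, if_pos hv]
        rfl
      · rw [Pi.single_eq_of_ne hk, Pi.single_eq_of_ne hk, map_zero]
    constructor
    · intro hij
      have h := hcomm p (Pi.single i v') j
      rw [hw] at h
      rw [← h, Pi.single_eq_of_ne (Ne.symm hij), smul_zero, map_zero]
    · have h := hcomm p (Pi.single i v') i
      rw [hw] at h
      rw [← h, Pi.single_eq_same]
      apply Subtype.ext
      simp only [canonMap, LinearMap.coe_mk, AddHom.coe_mk, if_pos hv]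
      rfl
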